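/- For all real numbers a > 0, κ > 0, R > 0, b > 0, z ∈ ℝ, y ∈ ℝ and Θ ≥ 0, one has R²Θ²y² ≤ 2b(κ + e^z)³y² + b((κ + e^z)⁵/a)(κ⁻³ + 1)y⁴ + b((κ + e^z)³/(4a³))y⁸ + (2ab/(κ + e^z))·((1/b − κ − e^z)⁺)² + (a/(κ + e^z))·((RΘ − κ − e^z)⁺)⁴, where (r)⁺ := max(r, 0). -/

import Mathlib

set_option maxHeartbeats 1000000


/-- The algebraic estimate underlying inequality (5.3) in the proof of Theorem 1:
for all `a > 0`, `κ > 0`, `R > 0`, `b > 0`, `z, y ∈ ℝ` and `Θ ≥ 0`,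
`R²Θ²y² ≤ 2b(κ + e^z)³y² + b((κ + e^z)⁵/a)(κ⁻³ + 1)y⁴ + b((κ + e^z)³/(4a³))y⁸
  + (2ab/(κ + e^z))·((1/b − κ − e^z)⁺)² + (a/(κ + e^z))·((RΘ − κ − e^z)⁺)⁴`. -/
theorem dads_cross_term_estimate (a κ R b z y Θ : ℝ)
    (ha : 0 < a) (hκ : 0 < κ) (hR : 0 < R) (hb : 0 < b) (hΘ : 0 ≤ Θ) :
    R ^ 2 * Θ ^ 2 * y ^ 2 ≤
      2 * b * (κ + Real.exp z) ^ 3 * y ^ 2 +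
      b * ((κ + Real.exp z) ^ 5 / a) * (κ⁻¹ ^ 3 + 1) * y ^ 4 +
      b * ((κ + Real.exp z) ^ 3 / (4 * a ^ 3)) * y ^ 8 +
      (2 * a * b / (κ + Real.exp z)) * (max (1 / b - κ - Real.exp z) 0) ^ 2 +
      (a / (κ + Real.exp z)) * (max (R * Θ - κ - Real.exp z) 0) ^ 4 := by
  have hex : 0 < Real.exp z := Real.exp_pos z
  set E : ℝ := κ + Real.exp z with hEdef
  set d : ℝ := max (1 / b - κ - Real.exp z) 0 with hddef
  set q : ℝ := max (R * Θ - κ - Real.exp z) 0 with hqdef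
  have hE : 0 < E := by positivity
  have hκE : κ ≤ E := by simp [hEdef]; linarith
  have hd0 : (0:ℝ) ≤ d := le_max_right _ _
  have hq0 : (0:ℝ) ≤ q := le_max_right _ _
  have hdge : 1 / b - E ≤ d := by
    have := le_max_left (1 / b - κ - Real.exp z) (0:ℝ)
    rw [hEdef]; linarith
  have hqge : R * Θ - E ≤ q := by
    have := le_max_left (R * Θ - κ - Real.exp z) (0:ℝ)
    rw [hEdef]; linarith
  have hbinv : b * (1 / b) = 1 := by field_simp
  have hbd : 1 - b * E ≤ b * d := by
    have := mul_le_mul_of_nonneg_left hdge hb.le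
    nlinarith
  have hS : 0 ≤ R * Θ := mul_nonneg hR.le hΘ
  -- step 1 : (RΘ)² y² ≤ 2E²y² + 2q²y²
  have key1 : R ^ 2 * Θ ^ 2 * y ^ 2 ≤ 2 * E ^ 2 * y ^ 2 + 2 * q ^ 2 * y ^ 2 := by
    have h1 : R * Θ ≤ E + q := by linarith
    have h2 : (R * Θ) ^ 2 ≤ 2 * E ^ 2 + 2 * q ^ 2 := by nlinarith [sq_nonneg (E - q)]
    nlinarith [mul_le_mul_of_nonneg_right h2 (sq_nonneg y)]
  -- step 2 : 2E²y² ≤ 2bE³y² + 2bE²dy²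
  have key2 : 2 * E ^ 2 * y ^ 2 ≤ 2 * b * E ^ 3 * y ^ 2 + 2 * b * E ^ 2 * d * y ^ 2 := by
    have h := mul_le_mul_of_nonneg_right hbd (by positivity : (0:ℝ) ≤ 2 * E ^ 2 * y ^ 2)
    nlinarith
  have keyA : 2 * b * E ^ 2 * d * y ^ 2 ≤ b * (E ^ 5 / a) * y ^ 4 + (a * b / E) * d ^ 2 := by
    rw [← sub_nonneg]
    have h : b * (E ^ 5 / a) * y ^ 4 + (a * b / E) * d ^ 2 - 2 * b * E ^ 2 * d * y ^ 2
        = b * (E ^ 3 * y ^ 2 - a * d) ^ 2 / (a * E) := by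
      field_simp; ring
    rw [h]; positivity
  have keyB : 2 * q ^ 2 * y ^ 2 ≤ (a / E) * q ^ 4 + (E / a) * y ^ 4 := by
    rw [← sub_nonneg]
    have h : (a / E) * q ^ 4 + (E / a) * y ^ 4 - 2 * q ^ 2 * y ^ 2
        = (a * q ^ 2 - E * y ^ 2) ^ 2 / (a * E) := by
      field_simp; ring
    rw [h]; positivity
  have keyC : (E / a) * y ^ 4 ≤ b * E * ((E / a) * y ^ 4) + b * d * ((E / a) * y ^ 4) := by
    have h := mul_le_mul_of_nonneg_right hbd (by positivity : (0:ℝ) ≤ (E / a) * y ^ 4)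
    nlinarith
  have keyD : b * E * ((E / a) * y ^ 4) ≤ b * (E ^ 5 / a) * κ⁻¹ ^ 3 * y ^ 4 := by
    rw [← sub_nonneg]
    have h : b * (E ^ 5 / a) * κ⁻¹ ^ 3 * y ^ 4 - b * E * ((E / a) * y ^ 4)
        = (b * y ^ 4 * E ^ 2 * (E ^ 3 - κ ^ 3)) / (a * κ ^ 3) := by
      field_simp
    rw [h]
    apply div_nonneg _ (by positivity)
    apply mul_nonneg (by positivity)
    have h3 : κ ^ 3 ≤ E ^ 3 := pow_le_pow_left₀ hκ.le hκE 3
    linarith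
  have keyE : b * d * ((E / a) * y ^ 4)
      ≤ b * (E ^ 3 / (4 * a ^ 3)) * y ^ 8 + (a * b / E) * d ^ 2 := by
    rw [← sub_nonneg]
    have h : b * (E ^ 3 / (4 * a ^ 3)) * y ^ 8 + (a * b / E) * d ^ 2 - b * d * ((E / a) * y ^ 4)
        = b * (E ^ 2 * y ^ 4 - 2 * a ^ 2 * d) ^ 2 / (4 * a ^ 3 * E) := by
      field_simp; ring
    rw [h]; positivity
  have hsplit : b * (E ^ 5 / a) * (κ⁻¹ ^ 3 + 1) * y ^ 4
      = b * (E ^ 5 / a) * κ⁻¹ ^ 3 * y ^ 4 + b * (E ^ 5 / a) * y ^ 4 := by ring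
  have hsplit2 : (2 * a * b / E) * d ^ 2 = (a * b / E) * d ^ 2 + (a * b / E) * d ^ 2 := by ring
  clear_value E d q
  rw [hsplit, hsplit2]
  linarith [key1, key2, keyA, keyB, keyC, keyD, keyE]
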